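/- Let κ > 0 and let c ∈ ℝ^q be a point whose metric projection π_κ(c) onto κ·P^{q−1} lies in relint(κ·τ_J) for an ordered partition J of {1,…,q}. If c belongs to the closure of the preimage π_κ^{−1}(relint(κ·τ_{J₁})) for an ordered partition J₁ of {1,…,q}, then τ_J ⊆ τ_{J₁}. -/

import Mathlib

open Set Pointwise

noncomputable section

/-- The vertex `P_ρ` of the permutohedron: the point whose `ρ(k)`-th coordinate is
`k − (q+1)/2` (with `k` running through `1,…,q`, here 0-indexed as `Fin q`). -/
def vertexPoint (q : ℕ) (ρ : Equiv.Perm (Fin q)) : EuclideanSpace ℝ (Fin q) :=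
  WithLp.toLp 2 (fun i => ((ρ.symm i : ℕ) + 1 : ℝ) - ((q : ℝ) + 1) / 2)

/-- The permutohedron `P^{q−1} ⊂ ℝ^q`: the convex hull of the points `P_ρ`. -/
def permutohedron (q : ℕ) : Set (EuclideanSpace ℝ (Fin q)) :=
  convexHull ℝ (Set.range (vertexPoint q))

/-- An ordered partition `J = (J_1,…,J_s)` of `{1,…,q}` into `s` nonempty subsets. -/
structure OrderedPartition (q s : ℕ) where
  blocks : Fin s → Finset (Fin q)
  nonempty : ∀ k, (blocks k).Nonempty
  disjoint : ∀ k l, k ≠ l → Disjoint (blocks k) (blocks l)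
  covers : ∀ j : Fin q, ∃ k, j ∈ blocks k

/-- `cumCard J n = r_n`, the total cardinality of the first `n` blocks. -/
def cumCard {q s : ℕ} (J : OrderedPartition q s) (n : ℕ) : ℕ :=
  ∑ i ∈ Finset.univ.filter (fun i : Fin s => (i : ℕ) < n), (J.blocks i).card

/-- A permutation `π` is compatible with the ordered partition `J` if it maps the
`k`-th consecutive block `{r_{k−1}+1,…,r_k}` (0-indexed: `[r_{k−1}, r_k)`) onto `J_k`;
these are exactly the permutations `σρ` with `σ` in the Young subgroup. -/
def compatiblePerm {q s : ℕ} (J : OrderedPartition q s) (π : Equiv.Perm (Fin q)) : Prop :=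
  ∀ (k : Fin s) (i : Fin q),
    π i ∈ J.blocks k ↔ cumCard J (k : ℕ) ≤ (i : ℕ) ∧ (i : ℕ) < cumCard J ((k : ℕ) + 1)

/-- The face `τ_J` of the permutohedron corresponding to the ordered partition `J`. -/
def face (q s : ℕ) (J : OrderedPartition q s) : Set (EuclideanSpace ℝ (Fin q)) :=
  convexHull ℝ {x | ∃ π : Equiv.Perm (Fin q), compatiblePerm J π ∧ x = vertexPoint q π}

/-- The metric projection onto a set `K`: a point of `K` at minimal distance
(unique when `K` is compact, convex and nonempty in Euclidean space). -/
def metricProj {E : Type*} [MetricSpace E] [Nonempty E] (K : Set E) (c : E) : E :=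
  Classical.epsilon fun y => y ∈ K ∧ ∀ z ∈ K, dist c y ≤ dist c z

/-! ### Auxiliary lemmas -/

section Rearrange

lemma exists_le_perm {q : ℕ} (σ : Equiv.Perm (Fin q)) (i : Fin q) :
    ∃ j, j ≤ i ∧ i ≤ σ j := by
  by_contra h
  push_neg at h
  have hmap : (Finset.Iic i).image σ ⊆ Finset.Iio i := by
    intro x hx
    simp only [Finset.mem_image, Finset.mem_Iic] at hx
    obtain ⟨j, hj, rfl⟩ := hx
    exact Finset.mem_Iio.2 (h j hj)
  have h1 : ((Finset.Iic i).image σ).card = (Finset.Iic i).card :=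
    Finset.card_image_of_injective _ σ.injective
  have h2 := Finset.card_le_card hmap
  rw [h1, Fin.card_Iic, Fin.card_Iio] at h2
  omega

lemma monotone_comp_perm_eq {q : ℕ} {g : Fin q → ℝ} (σ : Equiv.Perm (Fin q))
    (hg : Monotone g) (hgσ : Monotone (g ∘ σ)) : ∀ i, g (σ i) = g i := by
  intro i
  apply le_antisymm
  · obtain ⟨j, hj, hij⟩ := exists_le_perm σ.symm i
    calc g (σ i) ≤ g (σ (σ.symm j)) := hgσ hij
    _ = g j := by rw [Equiv.apply_symm_apply]
    _ ≤ g i := hg hj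
  · obtain ⟨j, hj, hij⟩ := exists_le_perm σ i
    calc g i ≤ g (σ j) := hg hij
    _ ≤ g (σ i) := hgσ hj

end Rearrange

namespace OrderedPartition

variable {q u : ℕ} (J : OrderedPartition q u)

/-- The index of the block containing `j`. -/
def idx (j : Fin q) : Fin u := (J.covers j).choose

lemma idx_mem (j : Fin q) : j ∈ J.blocks (J.idx j) := (J.covers j).choose_spec

lemma mem_iff_idx {j : Fin q} {k : Fin u} : j ∈ J.blocks k ↔ J.idx j = k := by
  constructor
  · intro h
    by_contra hne
    exact (Finset.disjoint_left.1 (J.disjoint _ _ hne)) (J.idx_mem j) h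
  · rintro rfl; exact J.idx_mem j

/-- The weight of a coordinate: the (real-valued) index of its block. -/
def wval (j : Fin q) : ℝ := ((J.idx j : ℕ) : ℝ)

lemma idx_eq_of_wval_eq {a b : Fin q} (h : J.wval a = J.wval b) : J.idx a = J.idx b := by
  unfold wval at h
  exact Fin.val_injective (Nat.cast_injective h)

lemma cumCard_mono : Monotone (cumCard J) := by
  intro n m hnm
  apply Finset.sum_le_sum_of_subset
  intro i hi
  simp only [Finset.mem_filter, Finset.mem_univ, true_and] at hi ⊢
  omega

lemma interval_of_compatible {π : Equiv.Perm (Fin q)} (hπ : compatiblePerm J π) (i : Fin q) :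
    cumCard J (J.idx (π i) : ℕ) ≤ (i : ℕ) ∧ (i : ℕ) < cumCard J ((J.idx (π i) : ℕ) + 1) :=
  (hπ (J.idx (π i)) i).1 (J.idx_mem _)

lemma monotone_wval_of_compatible {π : Equiv.Perm (Fin q)} (hπ : compatiblePerm J π) :
    Monotone (fun i => J.wval (π i)) := by
  intro i i' hii
  obtain ⟨h1, h2⟩ := J.interval_of_compatible hπ i
  obtain ⟨h1', h2'⟩ := J.interval_of_compatible hπ i'
  have : (J.idx (π i) : ℕ) ≤ (J.idx (π i') : ℕ) := by
    by_contra hc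
    push_neg at hc
    have := J.cumCard_mono (show (J.idx (π i') : ℕ) + 1 ≤ (J.idx (π i) : ℕ) from hc)
    have hii' : (i : ℕ) ≤ (i' : ℕ) := hii
    omega
  show ((J.idx (π i) : ℕ) : ℝ) ≤ ((J.idx (π i') : ℕ) : ℝ)
  exact_mod_cast this

lemma compatible_of_idx_eq {π₁ ρ : Equiv.Perm (Fin q)} (hπ₁ : compatiblePerm J π₁)
    (h : ∀ i, J.idx (ρ i) = J.idx (π₁ i)) : compatiblePerm J ρ := by
  intro k i
  rw [J.mem_iff_idx, h i, ← J.mem_iff_idx]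
  exact hπ₁ k i

lemma idx_eq_of_compatible {π₁ ρ : Equiv.Perm (Fin q)} (hπ₁ : compatiblePerm J π₁)
    (hρ : compatiblePerm J ρ) (i : Fin q) : J.idx (ρ i) = J.idx (π₁ i) := by
  have h1 : ρ i ∈ J.blocks (J.idx (ρ i)) := J.idx_mem _
  have h2 := (hρ (J.idx (ρ i)) i).1 h1
  have h3 := (hπ₁ (J.idx (ρ i)) i).2 h2
  exact (J.mem_iff_idx.1 h3).symm

lemma sum_mul_wval_le {π₁ : Equiv.Perm (Fin q)} (hπ₁ : compatiblePerm J π₁)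
    (ρ : Equiv.Perm (Fin q)) :
    ∑ i : Fin q, ((i : ℕ) : ℝ) * J.wval (ρ i) ≤ ∑ i : Fin q, ((i : ℕ) : ℝ) * J.wval (π₁ i) := by
  have hmono : Monovary (fun i : Fin q => ((i : ℕ) : ℝ)) (fun i => J.wval (π₁ i)) := by
    intro i j h
    rcases le_or_gt i j with hij | hij
    · exact Nat.cast_le.2 hij
    · exact absurd (J.monotone_wval_of_compatible hπ₁ hij.le) (not_le.2 h)
  have := hmono.sum_smul_comp_perm_le_sum_smul (σ := ρ.trans π₁.symm)
  simpa [smul_eq_mul, Equiv.trans_apply, Equiv.apply_symm_apply] using this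

lemma compatible_of_sum_eq {π₁ : Equiv.Perm (Fin q)} (hπ₁ : compatiblePerm J π₁)
    (ρ : Equiv.Perm (Fin q))
    (h : ∑ i : Fin q, ((i : ℕ) : ℝ) * J.wval (ρ i) = ∑ i : Fin q, ((i : ℕ) : ℝ) * J.wval (π₁ i)) :
    compatiblePerm J ρ := by
  have hmono : Monovary (fun i : Fin q => ((i : ℕ) : ℝ)) (fun i => J.wval (π₁ i)) := by
    intro i j hlt
    rcases le_or_gt i j with hij | hij
    · exact Nat.cast_le.2 hij
    · exact absurd (J.monotone_wval_of_compatible hπ₁ hij.le) (not_le.2 hlt)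
  have heq : ∑ i : Fin q, (fun i : Fin q => ((i : ℕ) : ℝ)) i •
      (fun i => J.wval (π₁ i)) ((ρ.trans π₁.symm) i) = ∑ i : Fin q,
      (fun i : Fin q => ((i : ℕ) : ℝ)) i • (fun i => J.wval (π₁ i)) i := by
    simpa [smul_eq_mul, Equiv.trans_apply, Equiv.apply_symm_apply] using h
  have hmono2 := hmono.sum_smul_comp_perm_eq_sum_smul_iff.1 heq
  have hgmono : Monotone (fun i => J.wval (π₁ i)) := J.monotone_wval_of_compatible hπ₁
  have hgσmono : Monotone ((fun i => J.wval (π₁ i)) ∘ (ρ.trans π₁.symm)) := by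
    intro i j hij
    rcases eq_or_lt_of_le hij with rfl | hlt
    · exact le_refl _
    by_contra hc
    push_neg at hc
    have := hmono2 hc
    have h2 : ((j : ℕ) : ℝ) ≤ ((i : ℕ) : ℝ) := this
    have : (j : ℕ) ≤ (i : ℕ) := by exact_mod_cast h2
    omega
  have := monotone_comp_perm_eq (ρ.trans π₁.symm) hgmono hgσmono
  apply J.compatible_of_idx_eq hπ₁
  intro i
  have hi := this i
  simp only [Equiv.trans_apply, Equiv.apply_symm_apply] at hi
  exact J.idx_eq_of_wval_eq hi

end OrderedPartition

section IntrinsicSegment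

variable {E : Type*} [NormedAddCommGroup E] [InnerProductSpace ℝ E]

lemma exists_openSegment_of_mem_intrinsicInterior {S : Set E} {x y : E}
    (hx : x ∈ intrinsicInterior ℝ S) (hy : y ∈ S) :
    ∃ z ∈ S, x ∈ openSegment ℝ y z := by
  obtain ⟨x', hx', hxx⟩ := hx
  obtain ⟨ε, hε, hball⟩ := Metric.mem_nhds_iff.1 (mem_interior_iff_mem_nhds.1 hx')
  have hxS : x ∈ S := hxx ▸ hball (Metric.mem_ball_self hε)
  rcases eq_or_ne y x with rfl | hne
  · exact ⟨y, hy, by rw [openSegment_same]; exact rfl⟩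
  have hxA : x ∈ affineSpan ℝ S := subset_affineSpan ℝ S hxS
  have hyA : y ∈ affineSpan ℝ S := subset_affineSpan ℝ S hy
  set δ : ℝ := ε / (2 * ‖x - y‖) with hδdef
  have hxy : 0 < ‖x - y‖ := by
    rw [norm_pos_iff, sub_ne_zero]; exact fun h => hne h.symm
  have hδ : 0 < δ := div_pos hε (by positivity)
  set z : E := x + δ • (x - y) with hz
  have hzA : z ∈ affineSpan ℝ S := by
    have := AffineSubspace.smul_vsub_vadd_mem (affineSpan ℝ S) δ hxA hyA hxA
    simpa [vsub_eq_sub, vadd_eq_add, hz, add_comm] using this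
  have hzS : z ∈ S := by
    have hd : dist (⟨z, hzA⟩ : affineSpan ℝ S) x' < ε := by
      rw [Subtype.dist_eq]
      show dist z (↑x') < ε
      rw [hxx, dist_eq_norm]
      have hzx : z - x = δ • (x - y) := by rw [hz]; abel
      rw [hzx, norm_smul, Real.norm_eq_abs, abs_of_pos hδ, hδdef]
      rw [div_mul_eq_mul_div, mul_comm]
      rw [div_lt_iff₀ (by positivity)]
      nlinarith [hε, hxy]
    exact hball hd
  refine ⟨z, hzS, ?_⟩
  refine ⟨δ / (1 + δ), 1 / (1 + δ), by positivity, by positivity, ?_, ?_⟩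
  · field_simp; ring
  · rw [hz]
    match_scalars <;> field_simp <;> ring

end IntrinsicSegment

section MetricProjLemmas

open RealInnerProductSpace

variable {E : Type*} [NormedAddCommGroup E] [InnerProductSpace ℝ E] {K : Set E}

omit [InnerProductSpace ℝ E] in
lemma metricProj_spec (hK : IsCompact K) (hne : K.Nonempty) (c : E) :
    metricProj K c ∈ K ∧ ∀ z ∈ K, dist c (metricProj K c) ≤ dist c z := by
  have : Nonempty E := ⟨c⟩
  apply Classical.epsilon_spec (p := fun y => y ∈ K ∧ ∀ z ∈ K, dist c y ≤ dist c z)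
  obtain ⟨y, hyK, hmin⟩ := hK.exists_isMinOn hne (continuous_const.dist continuous_id).continuousOn
  exact ⟨y, hyK, fun z hz => hmin hz⟩

lemma metricProj_inner_le (hK : IsCompact K) (hconv : Convex ℝ K) (hne : K.Nonempty)
    (c : E) {w : E} (hw : w ∈ K) : ⟪c - metricProj K c, w - metricProj K c⟫ ≤ 0 := by
  obtain ⟨hp, hmin⟩ := metricProj_spec hK hne c
  set p := metricProj K c
  have hinf : ‖c - p‖ = ⨅ w : K, ‖c - w‖ := by
    have : Nonempty K := hne.to_subtype
    refine le_antisymm (le_ciInf fun z => ?_)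
      (ciInf_le (f := fun w : K => ‖c - w‖) ⟨0, fun _ ⟨_, h⟩ => h ▸ norm_nonneg _⟩ ⟨p, hp⟩)
    simpa [dist_eq_norm] using hmin z z.2
  exact (norm_eq_iInf_iff_real_inner_le_zero hconv hp).1 hinf w hw

lemma metricProj_lipschitz (hK : IsCompact K) (hconv : Convex ℝ K) (hne : K.Nonempty) :
    LipschitzWith 1 (metricProj K) := by
  refine LipschitzWith.of_dist_le_mul fun x y => ?_
  have hp : metricProj K x ∈ K := (metricProj_spec hK hne x).1
  have hp' : metricProj K y ∈ K := (metricProj_spec hK hne y).1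
  have h1 := metricProj_inner_le hK hconv hne x hp'
  have h2 := metricProj_inner_le hK hconv hne y hp
  set p := metricProj K x
  set p' := metricProj K y
  have h1' : 0 ≤ ⟪p - x, p' - p⟫ := by
    have : ⟪p - x, p' - p⟫ = -⟪x - p, p' - p⟫ := by
      rw [← inner_neg_left]; congr 1; abel
    linarith [this]
  have h2' : 0 ≤ ⟪y - p', p' - p⟫ := by
    have : ⟪y - p', p' - p⟫ = -⟪y - p', p - p'⟫ := by
      rw [← inner_neg_right]; congr 1; abel
    linarith [this]
  have expand : ⟪y - x, p' - p⟫ = ⟪y - p', p' - p⟫ + ⟪p' - p, p' - p⟫ + ⟪p - x, p' - p⟫ := by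
    rw [← inner_add_left, ← inner_add_left]; congr 1; abel
  have hkey : ‖p' - p‖ ^ 2 ≤ ⟪y - x, p' - p⟫ := by
    rw [expand, ← real_inner_self_eq_norm_sq]; linarith
  have hcs : ⟪y - x, p' - p⟫ ≤ ‖y - x‖ * ‖p' - p‖ := real_inner_le_norm _ _
  have hnn : (0:ℝ) ≤ ‖p' - p‖ := norm_nonneg _
  have hle : ‖p' - p‖ ≤ ‖y - x‖ := by nlinarith [norm_nonneg (y - x)]
  rw [NNReal.coe_one, one_mul, dist_eq_norm, dist_eq_norm]
  calc ‖p - p'‖ = ‖p' - p‖ := norm_sub_rev _ _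
  _ ≤ ‖y - x‖ := hle
  _ = ‖x - y‖ := norm_sub_rev _ _

end MetricProjLemmas

section LinearFunctional

variable {q u : ℕ}

/-- The linear functional associated to an ordered partition. -/
def lfun (J : OrderedPartition q u) (x : EuclideanSpace ℝ (Fin q)) : ℝ :=
  ∑ j : Fin q, J.wval j * x j

lemma lfun_add (J : OrderedPartition q u) (x y : EuclideanSpace ℝ (Fin q)) :
    lfun J (x + y) = lfun J x + lfun J y := by
  simp only [lfun, PiLp.add_apply, mul_add, Finset.sum_add_distrib]

lemma lfun_smul (J : OrderedPartition q u) (a : ℝ) (x : EuclideanSpace ℝ (Fin q)) :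
    lfun J (a • x) = a * lfun J x := by
  simp only [lfun, PiLp.smul_apply, smul_eq_mul, Finset.mul_sum]
  exact Finset.sum_congr rfl fun j _ => by ring

lemma lfun_vertex (J : OrderedPartition q u) (ρ : Equiv.Perm (Fin q)) :
    lfun J (vertexPoint q ρ) =
      (∑ i : Fin q, ((i : ℕ) : ℝ) * J.wval (ρ i)) +
        (1 - ((q : ℝ) + 1) / 2) * ∑ j : Fin q, J.wval j := by
  have h1 : lfun J (vertexPoint q ρ) =
      ∑ i : Fin q, J.wval (ρ i) * ((((i : ℕ) : ℝ) + 1) - ((q : ℝ) + 1) / 2) := by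
    rw [lfun, ← Equiv.sum_comp ρ (fun j => J.wval j * vertexPoint q ρ j)]
    exact Finset.sum_congr rfl fun i _ => by
      simp [vertexPoint, Equiv.symm_apply_apply]
  rw [h1, ← Equiv.sum_comp ρ (fun j => J.wval j) , Finset.mul_sum, ← Finset.sum_add_distrib]
  exact Finset.sum_congr rfl fun i _ => by ring

lemma lfun_vertex_le (J : OrderedPartition q u) {π₁ : Equiv.Perm (Fin q)}
    (hπ₁ : compatiblePerm J π₁) (ρ : Equiv.Perm (Fin q)) :
    lfun J (vertexPoint q ρ) ≤ lfun J (vertexPoint q π₁) := by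
  rw [lfun_vertex, lfun_vertex]
  have := J.sum_mul_wval_le hπ₁ ρ
  linarith

lemma compatible_of_lfun_vertex_eq (J : OrderedPartition q u) {π₁ : Equiv.Perm (Fin q)}
    (hπ₁ : compatiblePerm J π₁) (ρ : Equiv.Perm (Fin q))
    (h : lfun J (vertexPoint q ρ) = lfun J (vertexPoint q π₁)) : compatiblePerm J ρ := by
  rw [lfun_vertex, lfun_vertex] at h
  exact J.compatible_of_sum_eq hπ₁ ρ (by linarith)

lemma lfun_vertex_eq_of_compatible (J : OrderedPartition q u) {π₁ π : Equiv.Perm (Fin q)}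
    (hπ₁ : compatiblePerm J π₁) (hπ : compatiblePerm J π) :
    lfun J (vertexPoint q π) = lfun J (vertexPoint q π₁) := by
  rw [lfun_vertex, lfun_vertex]
  have : ∀ i, J.wval (π i) = J.wval (π₁ i) := fun i =>
    congrArg (fun k : Fin u => ((k : ℕ) : ℝ)) (J.idx_eq_of_compatible hπ₁ hπ i)
  simp only [this]

end LinearFunctional

/-- if `π_κ(c)` lies in the relative interior of `κ·τ_J` and `c` lies in
the closure of `π_κ^{−1}(relint(κ·τ_{J₁}))`, then `τ_J ⊆ τ_{J₁}`. -/
theorem face_subset_of_mem_closure_preimage (q s u : ℕ) (hq : 1 ≤ q)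
    (κ : ℝ) (hκ : 0 < κ)
    (J : OrderedPartition q s) (J₁ : OrderedPartition q u)
    (c : EuclideanSpace ℝ (Fin q))
    (h1 : metricProj (κ • permutohedron q) c ∈ intrinsicInterior ℝ (κ • face q s J))
    (h2 : c ∈ closure
      (metricProj (κ • permutohedron q) ⁻¹' intrinsicInterior ℝ (κ • face q u J₁))) :
    face q s J ⊆ face q u J₁ := by
  classical
  -- basic properties of the permutohedron and its scaled copy
  have hPc : IsCompact (permutohedron q) :=
    (Set.finite_range (vertexPoint q)).isCompact_convexHull (𝕜 := ℝ)
  have hPconv : Convex ℝ (permutohedron q) := convex_convexHull ℝ _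
  have hPne : (permutohedron q).Nonempty :=
    ⟨vertexPoint q 1, subset_convexHull ℝ _ ⟨1, rfl⟩⟩
  set K : Set (EuclideanSpace ℝ (Fin q)) := κ • permutohedron q with hKdef
  have hKc : IsCompact K := hPc.smul κ
  have hKconv : Convex ℝ K := hPconv.smul κ
  have hKne : K.Nonempty := hPne.smul_set
  set pc := metricProj K c with hpc
  have hpcK : pc ∈ K := (metricProj_spec hKc hKne c).1
  have hcont : Continuous (metricProj K) := (metricProj_lipschitz hKc hKconv hKne).continuous
  -- the generating sets of the two faces
  set S₁ : Set (EuclideanSpace ℝ (Fin q)) :=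
    {x | ∃ π : Equiv.Perm (Fin q), compatiblePerm J₁ π ∧ x = vertexPoint q π} with hS₁
  set S₀ : Set (EuclideanSpace ℝ (Fin q)) :=
    {x | ∃ π : Equiv.Perm (Fin q), compatiblePerm J π ∧ x = vertexPoint q π} with hS₀
  -- faces are compact (hulls of finite sets)
  have hS₁fin : S₁.Finite := by
    apply (Set.finite_range (vertexPoint q)).subset
    rintro x ⟨π, _, rfl⟩; exact ⟨π, rfl⟩
  have hface₁c : IsCompact (κ • face q u J₁) := (hS₁fin.isCompact_convexHull (𝕜 := ℝ)).smul κ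
  -- pc belongs to κ • face J₁
  have hpc₁ : pc ∈ κ • face q u J₁ := by
    have hmem : pc ∈ closure (intrinsicInterior ℝ (κ • face q u J₁)) :=
      map_mem_closure hcont h2 fun x hx => hx
    have := closure_mono (intrinsicInterior_subset
      (s := κ • face q u J₁)) hmem
    rwa [hface₁c.isClosed.closure_eq] at this
  -- a J₁-compatible permutation exists
  have hface₁ne : (face q u J₁).Nonempty := by
    obtain ⟨w, hw, _⟩ := hpc₁
    exact ⟨w, hw⟩
  have hS₁ne : S₁.Nonempty := by
    rw [hS₁]
    have := (convexHull_nonempty_iff (𝕜 := ℝ)).1 hface₁ne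
    exact this
  obtain ⟨v₁, π₁, hπ₁, rfl⟩ := hS₁ne
  set V : ℝ := lfun J₁ (vertexPoint q π₁) with hV
  -- the face J₁ lies in the hyperplane {lfun = V}
  have hface₁hyper : face q u J₁ ⊆ {x | lfun J₁ x = V} := by
    apply convexHull_min
    · rintro x ⟨π, hπ, rfl⟩
      exact lfun_vertex_eq_of_compatible J₁ hπ₁ hπ
    · intro x hx y hy a b ha hb hab
      simp only [Set.mem_setOf_eq] at hx hy ⊢
      rw [lfun_add, lfun_smul, lfun_smul, hx, hy]
      rw [← add_mul, hab, one_mul]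
  -- the permutohedron lies in the half-space {lfun ≤ V}
  have hPhalf : permutohedron q ⊆ {x | lfun J₁ x ≤ V} := by
    apply convexHull_min
    · rintro x ⟨ρ, rfl⟩
      exact lfun_vertex_le J₁ hπ₁ ρ
    · intro x hx y hy a b ha hb hab
      simp only [Set.mem_setOf_eq] at hx hy ⊢
      rw [lfun_add, lfun_smul, lfun_smul]
      have h1' := mul_le_mul_of_nonneg_left hx ha
      have h2' := mul_le_mul_of_nonneg_left hy hb
      have h3' : a * V + b * V = V := by rw [← add_mul, hab, one_mul]
      linarith
  have hKhalf : ∀ x ∈ K, lfun J₁ x ≤ κ * V := by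
    rintro x ⟨w, hw, rfl⟩
    rw [lfun_smul]
    exact mul_le_mul_of_nonneg_left (hPhalf hw) hκ.le
  have hface₁val : ∀ x ∈ κ • face q u J₁, lfun J₁ x = κ * V := by
    rintro x ⟨w, hw, rfl⟩
    rw [lfun_smul, hface₁hyper hw]
  have hpcV : lfun J₁ pc = κ * V := hface₁val pc hpc₁
  -- κ • face J ⊆ K
  have hfaceJP : face q s J ⊆ permutohedron q := by
    apply convexHull_mono
    rintro x ⟨π, _, rfl⟩; exact ⟨π, rfl⟩
  have hfaceJK : κ • face q s J ⊆ K := smul_set_mono hfaceJP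
  -- main argument: every generating vertex of face J is J₁-compatible
  suffices hgen : S₀ ⊆ face q u J₁ by
    calc face q s J = convexHull ℝ S₀ := rfl
    _ ⊆ face q u J₁ := convexHull_min hgen (convex_convexHull ℝ _)
  rintro x ⟨π, hπ, rfl⟩
  -- the scaled vertex lies in κ • face J
  have hyface : κ • vertexPoint q π ∈ κ • face q s J :=
    smul_mem_smul_set (subset_convexHull ℝ _ ⟨π, hπ, rfl⟩)
  obtain ⟨z, hz, hseg⟩ := exists_openSegment_of_mem_intrinsicInterior h1 hyface
  obtain ⟨a, b, ha, hb, hab, hxe⟩ := hseg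
  -- evaluate lfun on the segment
  have hyle : lfun J₁ (κ • vertexPoint q π) ≤ κ * V := hKhalf _ (hfaceJK hyface)
  have hzle : lfun J₁ z ≤ κ * V := hKhalf _ (hfaceJK hz)
  have hcomb : a * lfun J₁ (κ • vertexPoint q π) + b * lfun J₁ z = κ * V := by
    rw [← lfun_smul, ← lfun_smul, ← lfun_add, hxe]
    exact hpcV
  have hyeq : lfun J₁ (κ • vertexPoint q π) = κ * V := by
    by_contra hne'
    have hlt : lfun J₁ (κ • vertexPoint q π) < κ * V := lt_of_le_of_ne hyle hne'
    have ha1 : a * lfun J₁ (κ • vertexPoint q π) < a * (κ * V) := mul_lt_mul_of_pos_left hlt ha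
    have hb1 : b * lfun J₁ z ≤ b * (κ * V) := mul_le_mul_of_nonneg_left hzle hb.le
    have hab1 : a * (κ * V) + b * (κ * V) = κ * V := by rw [← add_mul, hab, one_mul]
    linarith
  have hveq : lfun J₁ (vertexPoint q π) = V := by
    rw [lfun_smul] at hyeq
    exact mul_left_cancel₀ (ne_of_gt hκ) hyeq
  exact subset_convexHull ℝ _ ⟨π, compatible_of_lfun_vertex_eq J₁ hπ₁ π hveq, rfl⟩

end
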